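/- Let H₁, H₂, H₃ be complex Banach spaces, let λ₀ ∈ ℂ, let B₁ : ℂ → L(H₂, H₃) and B₂ : ℂ → L(H₁, H₂) be analytic at λ₀, let M ∈ ℕ, let P₁, …, P_M be bounded operators on H₂ each of whose range has dimension at most 1, and let k₁, …, k_M be positive integers. Then there exists ε₀ > 0 such that for every ε ∈ (0, ε₀), the operator (1/(2πi)) · ∮_{|μ−λ₀|=ε} B₁(μ) ∘ ( Σ_{m=1}^{M} (μ−λ₀)^{−k_m} · P_m ) ∘ B₂(μ) dμ (the integral over the positively oriented circle of center λ₀ and radius ε) is a bounded operator from H₁ to H₃ whose range has dimension at most k₁ + ⋯ + k_M. -/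

import Mathlib

open scoped BigOperators
open Function Set Metric

section Helpers

variable {E : Type*} [NormedAddCommGroup E] [NormedSpace ℂ E]

lemma taylor_dslope (f : ℂ → E) (a : ℂ) (n : ℕ) (z : ℂ) :
    f z = (∑ l ∈ Finset.range n, (z - a) ^ l • (Function.swap dslope a)^[l] f a)
      + (z - a) ^ n • (Function.swap dslope a)^[n] f z := by
  induction n with
  | zero => simp
  | succ n ih =>
    have hg : (Function.swap dslope a)^[n] f z
        = (Function.swap dslope a)^[n] f a
          + (z - a) • dslope ((Function.swap dslope a)^[n] f) a z := by
      rw [sub_smul_dslope]; abel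
    rw [Finset.sum_range_succ, Function.iterate_succ_apply', ih, hg, smul_add, smul_smul,
      ← pow_succ, add_assoc]

lemma analyticOnNhd_dslope {f : ℂ → E} {a : ℂ} {s : Set ℂ}
    (hf : AnalyticOnNhd ℂ f s) : AnalyticOnNhd ℂ (dslope f a) s := by
  intro z hz
  rcases eq_or_ne z a with rfl | hza
  · obtain ⟨p, hp⟩ := hf z hz
    exact (hp.has_fpower_series_dslope_fslope).analyticAt
  · have h1 : AnalyticAt ℂ (fun w => (w - a)⁻¹ • (f w - f a)) z :=
      ((analyticAt_id.sub analyticAt_const).inv (sub_ne_zero.2 hza)).smul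
        ((hf z hz).sub analyticAt_const)
    refine h1.congr ?_
    filter_upwards [isOpen_ne.mem_nhds hza] with w hw
    rw [dslope_of_ne _ hw, slope_def_module]

lemma analyticOnNhd_iterate_dslope {f : ℂ → E} {a : ℂ} {s : Set ℂ}
    (hf : AnalyticOnNhd ℂ f s) (n : ℕ) :
    AnalyticOnNhd ℂ ((Function.swap dslope a)^[n] f) s := by
  induction n generalizing f with
  | zero => exact hf
  | succ n ih =>
    rw [Function.iterate_succ]
    exact ih (analyticOnNhd_dslope hf)

lemma circleIntegral_finset_sum {ι : Type*} (t : Finset ι) (f : ι → ℂ → E) {c : ℂ} {R : ℝ}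
    (h : ∀ i ∈ t, CircleIntegrable (f i) c R) :
    (∮ z in C(c, R), ∑ i ∈ t, f i z) = ∑ i ∈ t, ∮ z in C(c, R), f i z := by
  simp only [circleIntegral, Finset.smul_sum]
  exact intervalIntegral.integral_finset_sum fun i hi => (h i hi).out

lemma circleIntegral_add' {f g : ℂ → E} {c : ℂ} {R : ℝ} (hf : CircleIntegrable f c R)
    (hg : CircleIntegrable g c R) :
    (∮ z in C(c, R), (f z + g z)) = (∮ z in C(c, R), f z) + ∮ z in C(c, R), g z := by
  simp only [circleIntegral, smul_add]
  exact intervalIntegral.integral_add hf.out hg.out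

lemma exists_rank_one {H : Type*} [NormedAddCommGroup H] [NormedSpace ℂ H]
    (P : H →L[ℂ] H) (hP : Module.rank ℂ (LinearMap.range (P : H →ₗ[ℂ] H)) ≤ 1) :
    ∃ (v : H) (f : H →L[ℂ] ℂ), ∀ y, P y = f y • v := by
  obtain ⟨v₀, hv₀⟩ := rank_le_one_iff.mp hP
  by_cases hv : (v₀ : H) = 0
  · refine ⟨0, 0, fun y => ?_⟩
    obtain ⟨r, hr⟩ := hv₀ ⟨P y, LinearMap.mem_range_self _ y⟩
    have h2 : r • (v₀ : H) = P y := congrArg Subtype.val hr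
    simp [hv] at h2
    simp [← h2]
  · choose r hr using fun y => hv₀ ⟨P y, LinearMap.mem_range_self _ y⟩
    have hr' : ∀ y, r y • (v₀ : H) = P y := fun y => congrArg Subtype.val (hr y)
    have hinj : Function.Injective (fun cc : ℂ => cc • (v₀ : H)) := smul_left_injective ℂ hv
    have hadd : ∀ y z, r (y + z) = r y + r z := by
      intro y z
      apply hinj
      simp only [add_smul, hr', map_add]
    have hsmul : ∀ (cc : ℂ) y, r (cc • y) = cc • r y := by
      intro cc y
      apply hinj
      simp only [smul_eq_mul, ← smul_smul, hr', map_smul]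
    have hv' : (0 : ℝ) < ‖(v₀ : H)‖ := norm_pos_iff.2 hv
    set flin : H →ₗ[ℂ] ℂ := { toFun := r, map_add' := hadd, map_smul' := hsmul } with hflin
    have hbound : ∀ y, ‖flin y‖ ≤ (‖P‖ / ‖(v₀ : H)‖) * ‖y‖ := by
      intro y
      rw [div_mul_eq_mul_div, le_div_iff₀ hv']
      calc ‖flin y‖ * ‖(v₀ : H)‖ = ‖r y • (v₀ : H)‖ := (norm_smul _ _).symm
        _ = ‖P y‖ := by rw [hr']
        _ ≤ ‖P‖ * ‖y‖ := P.le_opNorm y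
    exact ⟨v₀, flin.mkContinuous _ hbound, fun y => (hr' y).symm⟩

end Helpers

/-- Gohberg–Sigal residue rank bound: if `B₁`, `B₂` are operator-valued maps analytic at
`λ₀`, `P₁, …, P_M` have rank at most one, and `k₁, …, k_M > 0`, then for all small
`ε > 0` the operator `(2πi)⁻¹ ∮_{|μ-λ₀|=ε} B₁(μ) (Σ_m (μ-λ₀)^{-k_m} P_m) B₂(μ) dμ`
has range of dimension at most `k₁ + ⋯ + k_M`. -/
theorem stmt_8 {H₁ H₂ H₃ : Type*}
    [NormedAddCommGroup H₁] [NormedSpace ℂ H₁] [CompleteSpace H₁]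
    [NormedAddCommGroup H₂] [NormedSpace ℂ H₂] [CompleteSpace H₂]
    [NormedAddCommGroup H₃] [NormedSpace ℂ H₃] [CompleteSpace H₃]
    (lam₀ : ℂ) (B₁ : ℂ → (H₂ →L[ℂ] H₃)) (B₂ : ℂ → (H₁ →L[ℂ] H₂))
    (hB₁ : AnalyticAt ℂ B₁ lam₀) (hB₂ : AnalyticAt ℂ B₂ lam₀)
    (M : ℕ) (P : Fin M → (H₂ →L[ℂ] H₂))
    (hP : ∀ m, Module.rank ℂ (LinearMap.range (P m : H₂ →ₗ[ℂ] H₂)) ≤ 1)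
    (k : Fin M → ℕ) (hk : ∀ m, 0 < k m) :
    ∃ ε₀ > (0 : ℝ), ∀ ε ∈ Set.Ioo (0 : ℝ) ε₀,
      Module.rank ℂ (LinearMap.range
        ((((2 * (Real.pi : ℂ) * Complex.I)⁻¹ •
          (∮ μ in C(lam₀, ε),
            ((B₁ μ).comp (∑ m, ((μ - lam₀) ^ (-(k m : ℤ))) • P m)).comp (B₂ μ)) :
          H₁ →L[ℂ] H₃) : H₁ →ₗ[ℂ] H₃)))
      ≤ ((∑ m, k m : ℕ) : Cardinal) := by
  classical
  choose v f hvf using fun m => exists_rank_one (P m) (hP m)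
  obtain ⟨δ, hδ, hana⟩ := Metric.eventually_nhds_iff.mp
    (hB₁.eventually_analyticAt.and hB₂.eventually_analyticAt)
  set s : Set ℂ := Metric.ball lam₀ δ with hs_def
  have A₁ : AnalyticOnNhd ℂ B₁ s := fun z hz => (hana (mem_ball.mp hz)).1
  have A₂ : AnalyticOnNhd ℂ B₂ s := fun z hz => (hana (mem_ball.mp hz)).2
  set W : (m : Fin M) → ℕ → ℂ → H₃ :=
    fun m l => (Function.swap dslope lam₀)^[l] (fun μ => B₁ μ (v m)) with hW_def
  have AW : ∀ m l, AnalyticOnNhd ℂ (W m l) s := by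
    intro m l
    refine analyticOnNhd_iterate_dslope (fun z hz => ?_) l
    exact ((ContinuousLinearMap.apply ℂ H₃ (v m)).analyticAt (B₁ z)).comp (A₁ z hz)
  set wv : (Σ m : Fin M, Fin (k m)) → H₃ := fun p => W p.1 p.2 lam₀ with hwv_def
  set S : Submodule ℂ H₃ := Submodule.span ℂ (Set.range wv) with hS_def
  have hrankS : Module.rank ℂ S ≤ ((∑ m, k m : ℕ) : Cardinal) := by
    refine (rank_span_le _).trans ?_
    letI : Fintype ↥(Set.range wv) := Set.fintypeRange wv
    rw [Cardinal.mk_fintype]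
    refine le_trans (Nat.cast_le.mpr (Fintype.card_range_le wv)) ?_
    rw [Fintype.card_sigma]
    simp
  refine ⟨δ, hδ, fun ε hε => ?_⟩
  obtain ⟨hε0, hεδ⟩ := hε
  have hsph : Metric.sphere lam₀ ε ⊆ s :=
    Metric.sphere_subset_closedBall.trans (Metric.closedBall_subset_ball hεδ)
  have hne : ∀ μ ∈ Metric.sphere lam₀ ε, μ - lam₀ ≠ 0 := fun μ hμ =>
    sub_ne_zero.2 (ne_of_mem_sphere hμ hε0.ne')
  -- continuity on the sphere
  have contB₁ : ContinuousOn B₁ (Metric.sphere lam₀ ε) := fun μ hμ =>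
    ((A₁ μ (hsph hμ)).continuousAt).continuousWithinAt
  have contB₂ : ContinuousOn B₂ (Metric.sphere lam₀ ε) := fun μ hμ =>
    ((A₂ μ (hsph hμ)).continuousAt).continuousWithinAt
  have cont_zpow : ∀ n : ℤ, ContinuousOn (fun μ : ℂ => (μ - lam₀) ^ n)
      (Metric.sphere lam₀ ε) := fun n μ hμ =>
    ((continuousAt_id.sub continuousAt_const).zpow₀ n (Or.inl (hne μ hμ))).continuousWithinAt
  have cont_W : ∀ m l, ContinuousOn (W m l) (Metric.sphere lam₀ ε) := fun m l μ hμ =>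
    ((AW m l μ (hsph hμ)).continuousAt).continuousWithinAt
  have contF : ContinuousOn (fun μ =>
      ((B₁ μ).comp (∑ m, ((μ - lam₀) ^ (-(k m : ℤ))) • P m)).comp (B₂ μ))
      (Metric.sphere lam₀ ε) :=
    (contB₁.clm_comp (continuousOn_finset_sum _ fun m _ =>
      (cont_zpow _).smul continuousOn_const)).clm_comp contB₂
  have hiF : CircleIntegrable (fun μ =>
      ((B₁ μ).comp (∑ m, ((μ - lam₀) ^ (-(k m : ℤ))) • P m)).comp (B₂ μ)) lam₀ ε :=
    contF.circleIntegrable hε0.le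
  -- reduce range to S
  have key : ∀ x : H₁,
      ((2 * (Real.pi : ℂ) * Complex.I)⁻¹ •
        (∮ μ in C(lam₀, ε),
          ((B₁ μ).comp (∑ m, ((μ - lam₀) ^ (-(k m : ℤ))) • P m)).comp (B₂ μ)) :
        H₁ →L[ℂ] H₃) x ∈ S := by
    intro x
    set a : Fin M → ℂ → ℂ := fun m μ => f m (B₂ μ x) with ha_def
    have cont_a : ∀ m, ContinuousOn (a m) (Metric.sphere lam₀ ε) := fun m =>
      (f m).continuous.comp_continuousOn
        (((ContinuousLinearMap.apply ℂ H₂ x).continuous).comp_continuousOn contB₂)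
    have ana_a : ∀ m, AnalyticOnNhd ℂ (a m) s := fun m z hz =>
      ((f m).analyticAt _).comp
        (((ContinuousLinearMap.apply ℂ H₂ x).analyticAt _).comp (A₂ z hz))
    set c : Fin M → ℕ → ℂ → ℂ :=
      fun m l μ => (μ - lam₀) ^ ((l : ℤ) - (k m : ℤ)) * a m μ with hc_def
    have cont_c : ∀ m l, ContinuousOn (c m l) (Metric.sphere lam₀ ε) := fun m l =>
      (cont_zpow _).mul (cont_a m)
    set g : Fin M → ℂ → H₃ := fun m μ => a m μ • W m (k m) μ with hg_def
    have cont_g : ∀ m, ContinuousOn (g m) (Metric.sphere lam₀ ε) := fun m =>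
      (cont_a m).smul (cont_W m (k m))
    have ana_g : ∀ m, AnalyticOnNhd ℂ (g m) s := fun m z hz =>
      (ana_a m z hz).smul (AW m (k m) z hz)
    have hint1 : ∀ m l, CircleIntegrable (fun μ => c m l μ • W m l lam₀) lam₀ ε := fun m l =>
      ((cont_c m l).smul continuousOn_const).circleIntegrable hε0.le
    have hint2 : ∀ m, CircleIntegrable (g m) lam₀ ε := fun m =>
      (cont_g m).circleIntegrable hε0.le
    have hint3 : ∀ m, CircleIntegrable
        (fun μ => (∑ l ∈ Finset.range (k m), c m l μ • W m l lam₀) + g m μ) lam₀ ε := fun m =>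
      ((continuousOn_finset_sum _ fun l _ =>
        (cont_c m l).smul continuousOn_const).add (cont_g m)).circleIntegrable hε0.le
    -- step A : apply commutes with the integral
    have stepA : ((2 * (Real.pi : ℂ) * Complex.I)⁻¹ •
        (∮ μ in C(lam₀, ε),
          ((B₁ μ).comp (∑ m, ((μ - lam₀) ^ (-(k m : ℤ))) • P m)).comp (B₂ μ)) :
        H₁ →L[ℂ] H₃) x
        = (2 * (Real.pi : ℂ) * Complex.I)⁻¹ •
          (∮ μ in C(lam₀, ε),
            (((B₁ μ).comp (∑ m, ((μ - lam₀) ^ (-(k m : ℤ))) • P m)).comp (B₂ μ)) x) := by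
      rw [ContinuousLinearMap.smul_apply]
      congr 1
      calc (∮ μ in C(lam₀, ε),
            ((B₁ μ).comp (∑ m, ((μ - lam₀) ^ (-(k m : ℤ))) • P m)).comp (B₂ μ)) x
          = ∫ θ in (0:ℝ)..2 * Real.pi,
              (deriv (circleMap lam₀ ε) θ •
              (((B₁ (circleMap lam₀ ε θ)).comp
                (∑ m, ((circleMap lam₀ ε θ - lam₀) ^ (-(k m : ℤ))) • P m)).comp
                (B₂ (circleMap lam₀ ε θ)))) x :=
            ContinuousLinearMap.intervalIntegral_apply hiF.out x
        _ = _ := by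
            simp only [ContinuousLinearMap.smul_apply]
            rfl
    -- step B : pointwise identity on the sphere
    have stepB : Set.EqOn
        (fun μ => (((B₁ μ).comp (∑ m, ((μ - lam₀) ^ (-(k m : ℤ))) • P m)).comp (B₂ μ)) x)
        (fun μ => ∑ m, ((∑ l ∈ Finset.range (k m), c m l μ • W m l lam₀) + g m μ))
        (Metric.sphere lam₀ ε) := by
      intro μ hμ
      have hzero := hne μ hμ
      simp only [ContinuousLinearMap.comp_apply, ContinuousLinearMap.sum_apply,
        ContinuousLinearMap.smul_apply, map_sum, map_smul]
      refine Finset.sum_congr rfl fun m _ => ?_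
      rw [hvf m ((B₂ μ) x), map_smul]
      have ht : (B₁ μ) (v m)
          = (∑ l ∈ Finset.range (k m), (μ - lam₀) ^ l • W m l lam₀)
            + (μ - lam₀) ^ (k m) • W m (k m) μ :=
        taylor_dslope (fun μ' => B₁ μ' (v m)) lam₀ (k m) μ
      rw [ht, smul_add, smul_add, Finset.smul_sum, Finset.smul_sum]
      congr 1
      · refine Finset.sum_congr rfl fun l hl => ?_
        simp only [smul_smul, hc_def, ha_def]
        congr 1
        rw [← zpow_natCast (μ - lam₀) l, sub_eq_neg_add (l : ℤ) (k m : ℤ), zpow_add₀ hzero]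
        ring
      · simp only [smul_smul, hg_def, ha_def]
        congr 1
        have h1 : (μ - lam₀) ^ (-(k m : ℤ)) * (μ - lam₀) ^ (k m) = 1 := by
          rw [← zpow_natCast (μ - lam₀) (k m), ← zpow_add₀ hzero, neg_add_cancel, zpow_zero]
        linear_combination ((f m) ((B₂ μ) x)) * h1
    -- step C : compute the integral of the decomposed function
    have hzg : ∀ m, (∮ μ in C(lam₀, ε), g m μ) = 0 := by
      intro m
      refine Complex.circleIntegral_eq_zero_of_differentiable_on_off_countable hε0.le
        Set.countable_empty ?_ ?_
      · intro μ hμ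
        have hμs : μ ∈ s := Metric.closedBall_subset_ball hεδ hμ
        exact ((ana_g m μ hμs).differentiableAt.continuousAt).continuousWithinAt
      · rintro μ ⟨hμ, -⟩
        exact (ana_g m μ (Metric.ball_subset_ball hεδ.le hμ)).differentiableAt
    have stepC : (∮ μ in C(lam₀, ε),
        ∑ m, ((∑ l ∈ Finset.range (k m), c m l μ • W m l lam₀) + g m μ))
        = ∑ m, ∑ l ∈ Finset.range (k m),
            (∮ μ in C(lam₀, ε), c m l μ) • W m l lam₀ := by
      rw [circleIntegral_finset_sum _ _ fun m _ => hint3 m]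
      refine Finset.sum_congr rfl fun m _ => ?_
      rw [circleIntegral_add' (f := fun μ => ∑ l ∈ Finset.range (k m), c m l μ • W m l lam₀)
          (((continuousOn_finset_sum _ fun l _ =>
            (cont_c m l).smul continuousOn_const).circleIntegrable hε0.le)) (hint2 m),
        hzg m, add_zero,
        circleIntegral_finset_sum _ _ fun l _ => hint1 m l]
      refine Finset.sum_congr rfl fun l _ => ?_
      exact circleIntegral.integral_smul_const _ _ _ _
    rw [stepA, circleIntegral.integral_congr hε0.le stepB, stepC]
    refine Submodule.smul_mem _ _ (Submodule.sum_mem _ fun m _ => Submodule.sum_mem _ ?_)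
    intro l hl
    refine Submodule.smul_mem _ _ (Submodule.subset_span ?_)
    exact ⟨⟨m, ⟨l, Finset.mem_range.mp hl⟩⟩, rfl⟩
  have hle : LinearMap.range
      ((((2 * (Real.pi : ℂ) * Complex.I)⁻¹ •
        (∮ μ in C(lam₀, ε),
          ((B₁ μ).comp (∑ m, ((μ - lam₀) ^ (-(k m : ℤ))) • P m)).comp (B₂ μ)) :
        H₁ →L[ℂ] H₃) : H₁ →ₗ[ℂ] H₃)) ≤ S := by
    rintro y ⟨x, rfl⟩
    exact key x
  exact (Submodule.rank_mono hle).trans hrankS
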